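/- For every integer t ≥ 4, the function F(x) = x·∏_{i=1}^{t−2}(1−ix) is concave on the interval [0, 2/(t(t−2))]. -/

import Mathlib

open Finset Set

private noncomputable def Pf (n : ℕ) (x : ℝ) : ℝ := ∏ i ∈ Finset.Icc 1 n, (1 - (i : ℝ) * x)
private noncomputable def Tf (n : ℕ) (x : ℝ) : ℝ := ∑ i ∈ Finset.Icc 1 n, (i : ℝ) / (1 - (i : ℝ) * x)
private noncomputable def Sf (n : ℕ) (x : ℝ) : ℝ := ∑ i ∈ Finset.Icc 1 n, (i : ℝ) ^ 2 / (1 - (i : ℝ) * x) ^ 2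

private lemma gaussIcc (n : ℕ) : ∑ i ∈ Finset.Icc 1 n, (i : ℝ) = n * (n + 1) / 2 := by
  induction n with
  | zero => simp
  | succ m ih =>
    rw [Finset.sum_Icc_succ_top (by omega)]
    push_cast
    rw [ih]; ring

private lemma hasDerivAt_Pf (n : ℕ) (x : ℝ)
    (h : ∀ i ∈ Finset.Icc 1 n, (0:ℝ) < 1 - (i : ℝ) * x) :
    HasDerivAt (Pf n) (-(Pf n x * Tf n x)) x := by
  have hp := HasDerivAt.fun_finsetProd (u := Finset.Icc 1 n)
      (f := fun i y => 1 - (i : ℝ) * y) (f' := fun i => -(i : ℝ)) (x := x)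
      (fun i _ => by simpa using ((hasDerivAt_id x).const_mul (i:ℝ)).const_sub 1)
  refine hp.congr_deriv (Eq.symm ?_)
  rw [Tf, Finset.mul_sum, ← Finset.sum_neg_distrib]
  refine Finset.sum_congr rfl fun i hi => ?_
  have hne : (1 - (i:ℝ)*x) ≠ 0 := (h i hi).ne'
  have hpe := Finset.prod_erase_mul (Finset.Icc 1 n) (fun j => 1 - (j:ℝ)*x) hi
  rw [smul_eq_mul, Pf, ← hpe]
  rw [mul_assoc, mul_div_assoc', mul_div_cancel_left₀ _ hne]
  ring

private lemma hasDerivAt_Tf (n : ℕ) (x : ℝ)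
    (h : ∀ i ∈ Finset.Icc 1 n, (0:ℝ) < 1 - (i : ℝ) * x) :
    HasDerivAt (Tf n) (Sf n x) x := by
  apply HasDerivAt.fun_sum
  intro i hi
  have hne : (1 - (i:ℝ)*x) ≠ 0 := (h i hi).ne'
  have hd : HasDerivAt (fun y : ℝ => 1 - (i:ℝ)*y) (-(i:ℝ)) x := by
    simpa using ((hasDerivAt_id x).const_mul (i:ℝ)).const_sub 1
  have := (hasDerivAt_const x (i:ℝ)).div hd hne
  refine this.congr_deriv (Eq.symm ?_)
  field_simp
  ring

private lemma aux (n : ℕ) (hn : 2 ≤ n) :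
    ConcaveOn ℝ (Set.Icc 0 (2 / (((n:ℝ) + 2) * n)))
      (fun x : ℝ => x * ∏ i ∈ Finset.Icc 1 n, (1 - (i : ℝ) * x)) := by
  have hn2 : (2:ℝ) ≤ (n:ℝ) := by exact_mod_cast hn
  have hn1 : (1:ℝ) ≤ (n:ℝ) := by linarith
  have hn0 : (0:ℝ) < n := by linarith
  set b : ℝ := 2 / (((n:ℝ) + 2) * n) with hb
  have hbpos : 0 < b := by positivity
  have hxb2 : ∀ x : ℝ, x < b → (n:ℝ) * x < 1/2 := by
    intro x hx
    have hnb : (n:ℝ) * b = 2 / ((n:ℝ) + 2) := by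
      rw [hb]; field_simp
    have h2 : 2 / ((n:ℝ) + 2) ≤ 1/2 := by
      rw [div_le_div_iff₀ (by linarith) (by norm_num)]; linarith
    calc (n:ℝ) * x < (n:ℝ) * b := by apply mul_lt_mul_of_pos_left hx hn0
    _ ≤ 1/2 := by rw [hnb]; exact h2
  have hfac : ∀ x ∈ Set.Ioo (0:ℝ) b, ∀ i ∈ Finset.Icc 1 n, (0:ℝ) < 1 - (i:ℝ)*x := by
    intro x hx i hi
    have hi2 : (i:ℝ) ≤ n := by exact_mod_cast (Finset.mem_Icc.mp hi).2
    have := hxb2 x hx.2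
    nlinarith [hx.1, mul_le_mul_of_nonneg_right hi2 hx.1.le]
  refine concaveOn_of_hasDerivWithinAt2_nonpos (convex_Icc _ _)
      (f' := fun x => Pf n x * (1 - x * Tf n x))
      (f'' := fun x => Pf n x * (x * (Tf n x)^2 - 2 * Tf n x - x * Sf n x))
      ?_ ?_ ?_ ?_
  · apply Continuous.continuousOn
    exact continuous_id.mul (continuous_finset_prod _ fun i _ =>
      continuous_const.sub (continuous_const.mul continuous_id))
  · rw [interior_Icc]
    intro x hx
    have hP := hasDerivAt_Pf n x (hfac x hx)
    have h := (hasDerivAt_id x).mul hP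
    have h2 : HasDerivAt (fun y : ℝ => y * Pf n y) (Pf n x * (1 - x * Tf n x)) x := by
      refine h.congr_deriv (Eq.symm ?_); simp; ring
    exact h2.hasDerivWithinAt
  · rw [interior_Icc]
    intro x hx
    have hP := hasDerivAt_Pf n x (hfac x hx)
    have hT := hasDerivAt_Tf n x (hfac x hx)
    have h1 : HasDerivAt (fun y : ℝ => 1 - y * Tf n y) (-(1 * Tf n x + x * Sf n x)) x :=
      ((hasDerivAt_id x).mul hT).const_sub 1
    have h2 := hP.mul h1
    have h3 : HasDerivAt (fun y : ℝ => Pf n y * (1 - y * Tf n y))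
        (Pf n x * (x * (Tf n x)^2 - 2 * Tf n x - x * Sf n x)) x := by
      refine h2.congr_deriv (Eq.symm ?_); ring
    exact h3.hasDerivWithinAt
  · rw [interior_Icc]
    intro x hx
    have hfx := hfac x hx
    have hPpos : 0 < Pf n x := Finset.prod_pos hfx
    have hTnn : 0 ≤ Tf n x := Finset.sum_nonneg fun i hi =>
      div_nonneg (by positivity) (hfx i hi).le
    have hSnn : 0 ≤ Sf n x := Finset.sum_nonneg fun i _ => by positivity
    have hnx : (0:ℝ) < 1 - (n:ℝ)*x := by
      have := hxb2 x hx.2; linarith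
    -- bound T
    have hTbound : Tf n x ≤ ((n:ℝ) * (n+1) / 2) / (1 - (n:ℝ)*x) := by
      rw [Tf, ← gaussIcc n, Finset.sum_div]
      refine Finset.sum_le_sum fun i hi => ?_
      have hi2 : (i:ℝ) ≤ n := by exact_mod_cast (Finset.mem_Icc.mp hi).2
      exact div_le_div_of_nonneg_left (by positivity) hnx (by nlinarith [hx.1])
    have hxle : x * (((n:ℝ) + 2) * n) ≤ 2 := by
      rw [← le_div_iff₀ (by positivity)]
      exact hx.2.le
    have hxT : x * Tf n x ≤ 2 := by
      have h1 : x * Tf n x ≤ x * (((n:ℝ) * (n+1) / 2) / (1 - (n:ℝ)*x)) :=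
        mul_le_mul_of_nonneg_left hTbound hx.1.le
      have h2 : x * (((n:ℝ) * (n+1) / 2) / (1 - (n:ℝ)*x)) ≤ 2 := by
        rw [mul_div_assoc', div_le_iff₀ hnx]
        nlinarith [mul_nonneg (mul_nonneg hx.1.le hn0.le) (sub_nonneg.mpr hn1)]
      linarith
    have hmain : x * (Tf n x)^2 - 2 * Tf n x - x * Sf n x ≤ 0 := by
      nlinarith [mul_nonneg hTnn (sub_nonneg.mpr hxT), mul_nonneg hx.1.le hSnn]
    have := mul_nonneg hPpos.le (neg_nonneg.mpr hmain)
    nlinarith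

/-- For `t ≥ 4`, the function `F(x) = x·∏_{i=1}^{t−2}(1−ix)` is concave on
`[0, 2/(t(t−2))]`. -/
theorem stmt6 (t : ℕ) (ht : 4 ≤ t) :
    ConcaveOn ℝ (Set.Icc 0 (2 / ((t : ℝ) * ((t : ℝ) - 2))))
      (fun x : ℝ => x * ∏ i ∈ Finset.Icc 1 (t - 2), (1 - (i : ℝ) * x)) := by
  have h2 : ((t - 2 : ℕ) : ℝ) = (t : ℝ) - 2 := by
    have h : (2:ℕ) ≤ t := by omega
    push_cast [h]; ring
  have haux := aux (t - 2) (by omega)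
  rw [h2] at haux
  have hb : (((t:ℝ) - 2) + 2) * ((t:ℝ) - 2) = (t:ℝ) * ((t:ℝ) - 2) := by ring
  rw [hb] at haux
  exact haux
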